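/- arXiv:2308.08999 — 3 statements merged into one kernel-verified Lean document; each statement's English description precedes it below -/
import Mathlib

section
/- Let (R, m) be a commutative Noetherian local ring, let T be a finitely generated R-module, and let M be an R-submodule of T such that m·(M :_T m) is not contained in m·M (i.e., M is a Burch submodule of T). Then the m-adic completion M̂ is a Burch submodule of T̂ over the completion R̂; in particular, M̂ is a Burch R̂-module. -/
noncomputable section

open CategoryTheory IsLocalRing

/-- The Ext group `Ext^i_R(M, N)` of two `R`-modules. -/
abbrev ExtMod (R : Type) [CommRing R] (M N : Type) [AddCommGroup M] [Module R M]
    [AddCommGroup N] [Module R N] (i : ℕ) : ModuleCat R :=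
  ((Ext R (ModuleCat R) i).obj (Opposite.op (ModuleCat.of R M))).obj (ModuleCat.of R N)

/-- An `R`-module `M` is rigid if `Ext¹_R(M,M) = 0`. -/
def IsRigid (R : Type) [CommRing R] (M : Type) [AddCommGroup M] [Module R M] : Prop :=
  Subsingleton (ExtMod R M M 1)

/-- `M` is torsion-free: every non-zerodivisor of `R` acts injectively on `M`. -/
def IsTorsionFreeMod (R : Type) [CommRing R] (M : Type) [AddCommGroup M] [Module R M] : Prop :=
  ∀ r ∈ nonZeroDivisors R, ∀ x : M, r • x = 0 → x = 0

/-- The colon submodule `(N :_T I) = { t ∈ T | I • t ⊆ N }`. -/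
def colonSubmodule (R : Type) [CommRing R] {T : Type} [AddCommGroup T] [Module R T]
    (N : Submodule R T) (I : Ideal R) : Submodule R T where
  carrier := {t | ∀ r ∈ I, r • t ∈ N}
  add_mem' := fun {a b} ha hb r hr => by rw [smul_add]; exact N.add_mem (ha r hr) (hb r hr)
  zero_mem' := fun r hr => by rw [smul_zero]; exact N.zero_mem
  smul_mem' := fun c {x} hx r hr => by rw [smul_comm]; exact N.smul_mem c (hx r hr)

/-- `N ⊆ T` is a Burch submodule with respect to the ideal `I`
if `I • (N :_T I) ⊄ I • N`. -/
def IsBurchSubmoduleWrt (R : Type) [CommRing R] {T : Type} [AddCommGroup T] [Module R T]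
    (I : Ideal R) (N : Submodule R T) : Prop :=
  ¬ (I • colonSubmodule R N I ≤ I • N)

/-- `M` is a Burch `R`-module: it embeds in some module `T` such that
`m • (M :_T m) ⊄ m • M`, where `m` is the maximal ideal. -/
def IsBurch (R : Type) [CommRing R] [IsLocalRing R]
    (M : Type) [AddCommGroup M] [Module R M] : Prop :=
  ∃ (T : ModuleCat R) (ι : M →ₗ[R] T),
    Function.Injective ι ∧ IsBurchSubmoduleWrt R (maximalIdeal R) (LinearMap.range ι)

/-- `M` has rank `r`: the localization at every associated prime of `R`
is free of rank `r`. -/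
def HasRankN (R : Type) [CommRing R] (M : Type) [AddCommGroup M] [Module R M] (r : ℕ) : Prop :=
  ∀ (p : Ideal R) [p.IsPrime], p ∈ associatedPrimes R R →
    Nonempty ((LocalizedModule p.primeCompl M) ≃ₗ[Localization.AtPrime p]
      (Fin r → Localization.AtPrime p))

/-- The depth of a module over a local ring: the supremum of the lengths of
`M`-regular sequences contained in the maximal ideal. -/
def rdepth (R : Type) [CommRing R] [IsLocalRing R]
    (M : Type) [AddCommGroup M] [Module R M] : ℕ :=
  sSup {n | ∃ rs : List R, rs.length = n ∧ (∀ r ∈ rs, r ∈ maximalIdeal R) ∧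
    RingTheory.Sequence.IsRegular M rs}

/-- A (local) ring is Gorenstein if it has finite injective dimension over itself,
i.e. `Ext^i_R(N, R) = 0` for all `N` and all `i` large. -/
def IsGorensteinRing (R : Type) [CommRing R] : Prop :=
  ∃ n : ℕ, ∀ (N : ModuleCat R) (i : ℕ), n < i → Subsingleton (ExtMod R N R i)

/-- Projective dimension at most `n ∈ ℤ` (so that `pd M ≤ -1 ↔ M = 0`),
characterized by vanishing of `Ext^i(M, -)` for `i > n`. -/
def ProjDimLE (R : Type) [CommRing R] (M : Type) [AddCommGroup M] [Module R M] (n : ℤ) : Prop :=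
  ∀ (N : ModuleCat R) (i : ℕ), n < (i : ℤ) → Subsingleton (ExtMod R M N i)

/-- A finitely generated module `X` is totally reflexive if the canonical map to the
double dual is bijective and `Ext^i(X, R) = 0 = Ext^i(X*, R)` for all `i ≥ 1`. -/
def IsTotallyReflexive (R : Type) [CommRing R] (X : Type) [AddCommGroup X] [Module R X] : Prop :=
  Module.Finite R X ∧ Function.Bijective (Module.Dual.eval R X) ∧
    ∀ i : ℕ, 1 ≤ i →
      Subsingleton (ExtMod R X R i) ∧ Subsingleton (ExtMod R (Module.Dual R X) R i)

/-- Gorenstein dimension at most `n`: there is a resolution of length `n`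
by totally reflexive modules. -/
def GdimLE (R : Type) [CommRing R] : ℕ → (M : Type) → [AddCommGroup M] → [Module R M] → Prop
  | 0, M, _, _ => IsTotallyReflexive R M
  | n+1, M, _, _ => ∃ (X : ModuleCat R) (f : X →ₗ[R] M),
      IsTotallyReflexive R X ∧ Function.Surjective f ∧ GdimLE R n (LinearMap.ker f)

/-- A module is indecomposable if it is nonzero and admits no nontrivial
direct sum decomposition. -/
def IsIndecomposableMod (R : Type) [CommRing R] (M : Type) [AddCommGroup M] [Module R M] : Prop :=
  Nontrivial M ∧ ∀ A B : Submodule R M, IsCompl A B → A = ⊥ ∨ B = ⊥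

/-- A module `M` over `S` satisfies Serre's condition `(S_n)` if
`depth_{S_q}(M_q) ≥ min(n, dim S_q)` for every prime `q`. -/
def SatisfiesSn (S : Type) [CommRing S] (M : Type) [AddCommGroup M] [Module S M] (n : ℕ) : Prop :=
  ∀ (q : Ideal S) [q.IsPrime],
    min (n : WithBot (WithTop ℕ)) (ringKrullDim (Localization.AtPrime q)) ≤
      (rdepth (Localization.AtPrime q) (LocalizedModule q.primeCompl M) : WithBot (WithTop ℕ))

/-- A Noetherian local ring is regular if its maximal ideal can be generated by
`dim R` elements. -/
def IsRegularLocal (R : Type) [CommRing R] [IsLocalRing R] : Prop :=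
  ∃ s : Finset R, Ideal.span (s : Set R) = maximalIdeal R ∧
    (s.card : WithBot (WithTop ℕ)) = ringKrullDim R

/-- The module `ᵉR`: the abelian group `R` with `R`-action through the `e`-th
iterate of the Frobenius endomorphism. -/
def FrobModule (R : Type) [CommRing R] (p e : ℕ) : Type := R

instance (R : Type) [CommRing R] (p e : ℕ) : AddCommGroup (FrobModule R p e) :=
  inferInstanceAs (AddCommGroup R)

noncomputable instance (R : Type) [CommRing R] (p e : ℕ) [Fact p.Prime] [CharP R p] :
    Module R (FrobModule R p e) :=
  letI : ExpChar R p := .prime Fact.out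
  Module.compHom R (iterateFrobenius R p e)


section Aux

variable {R : Type} [CommRing R] (I : Ideal R)
variable {A B : Type} [AddCommGroup A] [Module R A] [AddCommGroup B] [Module R B]

theorem AdicCompletion.map_of' (f : A →ₗ[R] B) (x : A) :
    AdicCompletion.map I f (AdicCompletion.of I A x) = AdicCompletion.of I B (f x) := by
  ext n
  simp only [AdicCompletion.map_val_apply, AdicCompletion.of_apply, Submodule.mkQ_apply,
    LinearMap.reduceModIdeal_apply]

end Aux

theorem completion_of_burch_submodule_is_burch'
    (R : Type) [CommRing R] [IsNoetherianRing R] [IsLocalRing R]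
    (T : Type) [AddCommGroup T] [Module R T] [Module.Finite R T]
    (M : Submodule R T)
    (hburch : IsBurchSubmoduleWrt R (maximalIdeal R) M) :
    Function.Injective
      (AdicCompletion.map (maximalIdeal R) (M.subtype)) ∧
    IsBurchSubmoduleWrt (AdicCompletion (maximalIdeal R) R)
      ((maximalIdeal R).map
        (algebraMap R (AdicCompletion (maximalIdeal R) R)))
      (LinearMap.range (AdicCompletion.map (maximalIdeal R) (M.subtype))) := by
  set I := maximalIdeal R with hIdef
  set Rc := AdicCompletion I R with hRc
  set Tc := AdicCompletion I T with hTc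
  set φ := AdicCompletion.map I M.subtype with hφ
  set Mc : Submodule Rc Tc := LinearMap.range φ with hMc
  set Ic : Ideal Rc := I.map (algebraMap R Rc) with hIc
  refine ⟨AdicCompletion.map_injective I M.injective_subtype, ?_⟩
  -- extract the witness
  rw [IsBurchSubmoduleWrt] at hburch ⊢
  rw [SetLike.not_le_iff_exists] at hburch ⊢
  obtain ⟨x, hxC, hxM⟩ := hburch
  -- the image of M lands in Mc
  have hofM : ∀ m ∈ M, AdicCompletion.of I T m ∈ Mc := by
    intro m hm
    refine ⟨AdicCompletion.of I M ⟨m, hm⟩, ?_⟩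
    rw [hφ, AdicCompletion.map_of']
    rfl
  -- the image of the colon submodule lands in the colon submodule
  have hofC : ∀ c ∈ colonSubmodule R M I, AdicCompletion.of I T c ∈ colonSubmodule Rc Mc Ic := by
    intro c hc
    intro s hs
    have hle : Ic ≤ Submodule.comap
        (LinearMap.toSpanSingleton Rc Tc (AdicCompletion.of I T c)) Mc := by
      rw [hIc, Ideal.map_le_iff_le_comap]
      intro a ha
      simp only [Ideal.mem_comap, Submodule.mem_comap, LinearMap.toSpanSingleton_apply]
      rw [algebraMap_smul, ← map_smul]
      exact hofM _ (hc a ha)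
    exact hle hs
  refine ⟨AdicCompletion.of I T x, ?_, ?_⟩
  · -- membership in Ic • colon
    have : AdicCompletion.of I T x ∈
        (Ic • colonSubmodule Rc Mc Ic).restrictScalars R := by
      rw [hIc, Ideal.smul_restrictScalars]
      refine Submodule.smul_induction_on hxC (fun r hr c hc => ?_) (fun y z hy hz => ?_)
      · rw [map_smul]
        exact Submodule.smul_mem_smul hr (hofC c hc)
      · rw [map_add]; exact add_mem hy hz
    exact this
  · -- non-membership in Ic • Mc
    intro hmem
    have hmem' : AdicCompletion.of I T x ∈ I • Mc.restrictScalars R := by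
      rw [← Ideal.smul_restrictScalars, ← hIc]
      exact hmem
    apply hxM
    -- x ∈ I • M ⊔ I^n • ⊤ for every n
    have key : ∀ n : ℕ, x ∈ (maximalIdeal R • M) ⊔ (I ^ n • ⊤ : Submodule R T) := by
      intro n
      have hval : (AdicCompletion.of I T x).val n ∈
          Submodule.map (Submodule.mkQ (I ^ n • ⊤ : Submodule R T)) (I • M) := by
        refine Submodule.smul_induction_on hmem' (fun r hr w hw => ?_) (fun y z hy hz => ?_)
        · obtain ⟨u, hu⟩ := hw
          obtain ⟨v, hv⟩ := Submodule.Quotient.mk_surjective _ (u.val n)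
          have hwval : w.val n = Submodule.Quotient.mk (p := (I ^ n • ⊤ : Submodule R T)) v := by
            rw [← hu, hφ, AdicCompletion.map_val_apply, ← hv,
              LinearMap.reduceModIdeal_apply]
            rfl
          rw [AdicCompletion.val_smul_apply, hwval, ← Submodule.Quotient.mk_smul]
          exact ⟨r • (v : T), Submodule.smul_mem_smul hr v.2, rfl⟩
        · rw [AdicCompletion.val_add_apply]; exact add_mem hy hz
      have : x ∈ Submodule.comap (Submodule.mkQ (I ^ n • ⊤ : Submodule R T))
          (Submodule.map (Submodule.mkQ (I ^ n • ⊤ : Submodule R T)) (I • M)) := by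
        simpa only [Submodule.mem_comap, Submodule.mkQ_apply,
          AdicCompletion.of_apply] using hval
      rw [Submodule.comap_map_mkQ] at this
      rw [sup_comm] at this
      exact this
    -- Krull intersection in T ⧸ (I • M)
    set N : Submodule R T := maximalIdeal R • M with hN
    have hq : ∀ n : ℕ, Submodule.mkQ N x ∈ (I ^ n • ⊤ : Submodule R (T ⧸ N)) := by
      intro n
      have := key n
      have h2 : x ∈ Submodule.comap (Submodule.mkQ N)
          (Submodule.map (Submodule.mkQ N) (I ^ n • ⊤ : Submodule R T)) := by
        rw [Submodule.comap_map_mkQ]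
        exact this
      rw [Submodule.mem_comap, Submodule.map_smul'', Submodule.map_top,
        Submodule.range_mkQ] at h2
      exact h2
    have hbot : (⨅ n : ℕ, I ^ n • ⊤ : Submodule R (T ⧸ N)) = ⊥ :=
      Ideal.iInf_pow_smul_eq_bot_of_isLocalRing (I := I) (M := T ⧸ N)
        (IsLocalRing.maximalIdeal.isMaximal R).ne_top
    have : Submodule.mkQ N x = 0 := by
      have := Submodule.mem_iInf (fun n : ℕ => (I ^ n • ⊤ : Submodule R (T ⧸ N))) |>.mpr hq
      rw [hbot] at this
      simpa using this
    rwa [Submodule.mkQ_apply, Submodule.Quotient.mk_eq_zero] at this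

theorem completion_of_burch_submodule_is_burch
    (R : Type) [CommRing R] [IsNoetherianRing R] [IsLocalRing R]
    (T : Type) [AddCommGroup T] [Module R T] [Module.Finite R T]
    (M : Submodule R T)
    (hburch : IsBurchSubmoduleWrt R (maximalIdeal R) M) :
    Function.Injective
      (AdicCompletion.map (maximalIdeal R) (M.subtype)) ∧
    IsBurchSubmoduleWrt (AdicCompletion (maximalIdeal R) R)
      ((maximalIdeal R).map
        (algebraMap R (AdicCompletion (maximalIdeal R) R)))
      (LinearMap.range (AdicCompletion.map (maximalIdeal R) (M.subtype))) := by
  exact completion_of_burch_submodule_is_burch' R T M hburch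

end
end

section
/- Let (R, m) be a commutative Noetherian local ring and let M be a finitely generated R-module which is torsion-free and generically free, i.e., M_p is a free R_p-module for every associated prime p of R. Then the m-adic completion M̂ is a torsion-free module over the completion R̂. -/
noncomputable section

open CategoryTheory IsLocalRing

section Aux

variable {R : Type*} [CommRing R] {M : Type*} [AddCommGroup M] [Module R M]

private theorem colon_bot_eq_ann (x : M) :
    (⊥ : Submodule R M).colon {x} = (R ∙ x).annihilator := by
  ext a
  simp [Submodule.mem_colon_singleton, Submodule.mem_annihilator_span_singleton]

private theorem assFinite [IsNoetherianRing R] [IsNoetherian R M] :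
    (associatedPrimes R M).Finite := by
  classical
  set P : Submodule R M → Prop := fun N =>
    {p : Ideal R | p.IsPrime ∧ ∃ y ∈ N, y ≠ 0 ∧ (R ∙ y).annihilator = p}.Finite with hP
  have hbot : P ⊥ := by
    apply Set.Finite.subset (Set.finite_empty)
    rintro p ⟨-, y, hy, hy0, -⟩
    exact absurd (Submodule.mem_bot R |>.mp hy) hy0
  obtain ⟨N, hN, hNmax⟩ :=
    (set_has_maximal_iff_noetherian.mpr (inferInstance : IsNoetherian R M)) {N | P N} ⟨⊥, hbot⟩
  have hNtop : N = ⊤ := by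
    by_contra hne
    have : Nontrivial (M ⧸ N) :=
      Submodule.Quotient.nontrivial_iff.mpr hne
    obtain ⟨p, hp⟩ := associatedPrimes.nonempty R (M ⧸ N)
    obtain ⟨hpprime, xb, hxb⟩ := isAssociatedPrime_iff.mp (AssociatedPrimes.mem_iff.mp hp)
    rw [colon_bot_eq_ann] at hxb
    obtain ⟨x, rfl⟩ := Submodule.Quotient.mk_surjective N xb
    have hxne : Submodule.Quotient.mk (p := N) x ≠ 0 := by
      intro h
      rw [h, Submodule.span_singleton_eq_bot.mpr rfl, Submodule.annihilator_bot] at hxb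
      exact hpprime.ne_top hxb
    have hxnotN : x ∉ N := fun h => hxne ((Submodule.Quotient.mk_eq_zero N).mpr h)
    have key : ∀ a : R, a ∈ (R ∙ (Submodule.Quotient.mk (p := N) x)).annihilator ↔
        a • (Submodule.Quotient.mk (p := N) x) = 0 := fun a =>
      Submodule.mem_annihilator_span_singleton _ _
    have hN' : P (N ⊔ R ∙ x) := by
      apply Set.Finite.subset (hN.insert p)
      rintro q ⟨hqprime, y, hy, hy0, hq⟩
      rcases Classical.em (y ∈ N) with hyN | hyN
      · exact Set.mem_insert_iff.mpr (Or.inr ⟨hqprime, y, hyN, hy0, hq⟩)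
      rcases Classical.em (∃ r : R, r • y ∈ N ∧ r • y ≠ 0) with ⟨r, hrN, hr0⟩ | hc
      · -- witness z = r • y in N with annihilator q
        refine Set.mem_insert_iff.mpr (Or.inr ⟨hqprime, r • y, hrN, hr0, ?_⟩)
        apply le_antisymm
        · intro a ha
          rw [Submodule.mem_annihilator_span_singleton] at ha
          rw [smul_comm] at ha
          have : (a * r) • y = 0 := by rwa [mul_smul, smul_comm]
          have har : a * r ∈ q := by
            rw [← hq, Submodule.mem_annihilator_span_singleton]; exact this
          rcases hqprime.mem_or_mem har with h | h
          · exact h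
          · exfalso; apply hr0
            rw [← hq, Submodule.mem_annihilator_span_singleton] at h
            exact h
        · intro a ha
          rw [← hq, Submodule.mem_annihilator_span_singleton] at ha
          rw [Submodule.mem_annihilator_span_singleton, smul_comm, ha, smul_zero]
      · -- q = p
        push_neg at hc
        left
        -- write y = n + r • x
        obtain ⟨n, hn, z, hz, rfl⟩ := Submodule.mem_sup.mp hy
        obtain ⟨r, rfl⟩ := Submodule.mem_span_singleton.mp hz
        set yb : M ⧸ N := Submodule.Quotient.mk (n + r • x) with hyb
        have hybr : yb = r • Submodule.Quotient.mk (p := N) x := by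
          rw [hyb, Submodule.Quotient.mk_add, Submodule.Quotient.mk_smul,
            (Submodule.Quotient.mk_eq_zero N).mpr hn, zero_add]
        have hybne : yb ≠ 0 := fun h => hyN ((Submodule.Quotient.mk_eq_zero N).mp h)
        have hrp : r ∉ p := by
          intro hr
          apply hybne
          rw [hybr, ← key r |>.mp (hxb ▸ hr)]
        -- q ≤ p
        have hqp : q ≤ p := by
          intro a ha
          rw [← hq, Submodule.mem_annihilator_span_singleton] at ha
          have : (a * r) • Submodule.Quotient.mk (p := N) x = 0 := by
            rw [mul_smul, ← hybr, ← Submodule.Quotient.mk_smul, ha,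
              Submodule.Quotient.mk_zero]
          have harp : a * r ∈ p := by rw [hxb]; exact (key (a * r)).mpr this
          rcases hpprime.mem_or_mem harp with h | h
          · exact h
          · exact absurd h hrp
        -- p ≤ q
        have hpq : p ≤ q := by
          intro a ha
          rw [hxb] at ha
          have hax : a • Submodule.Quotient.mk (p := N) x = 0 := (key a).mp ha
          have hayb : a • yb = 0 := by rw [hybr, smul_comm, hax, smul_zero]
          have hayN : a • (n + r • x) ∈ N := by
            rw [← Submodule.Quotient.mk_eq_zero, Submodule.Quotient.mk_smul]
            exact hayb
          have : a • (n + r • x) = 0 := hc a hayN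
          rw [← hq, Submodule.mem_annihilator_span_singleton]
          exact this
        exact le_antisymm hqp hpq
    have hlt : N < N ⊔ R ∙ x :=
      lt_of_le_of_ne le_sup_left
        (fun h => hxnotN (h ▸ Submodule.mem_sup_right (Submodule.mem_span_singleton_self x)))
    exact hNmax _ hN' hlt
  -- conclude
  apply hN.subset
  rintro p hp
  obtain ⟨hpprime, y, hyp⟩ := isAssociatedPrime_iff.mp (AssociatedPrimes.mem_iff.mp hp)
  rw [colon_bot_eq_ann] at hyp
  refine ⟨hpprime, y, hNtop ▸ Submodule.mem_top, ?_, hyp.symm⟩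
  intro h
  rw [h, Submodule.span_singleton_eq_bot.mpr rfl, Submodule.annihilator_bot] at hyp
  exact hpprime.ne_top hyp


end Aux

section Aux2

set_option synthInstance.maxHeartbeats 1000000 in
/-- A prime of `R` consisting of zerodivisors and maximal as such is associated. -/
private theorem embed_free (R : Type) [CommRing R] [IsNoetherianRing R] [Nontrivial R]
    (M : Type) [AddCommGroup M] [Module R M] [Module.Finite R M]
    (htf : ∀ r ∈ nonZeroDivisors R, ∀ x : M, r • x = 0 → x = 0)
    (hgenfree : ∀ (p : Ideal R) [p.IsPrime], p ∈ associatedPrimes R R →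
      Module.Free (Localization.AtPrime p) (LocalizedModule p.primeCompl M)) :
    ∃ (n : ℕ) (f : M →ₗ[R] (Fin n → R)), Function.Injective f := by
  classical
  set S := nonZeroDivisors R with hS
  set Q := Localization S with hQdef
  set MQ := LocalizedModule S M with hMQ
  haveI : IsNoetherianRing Q := IsLocalization.isNoetherianRing S Q inferInstance
  haveI : Module.Finite Q MQ :=
    Module.Finite.of_isLocalizedModule S (LocalizedModule.mkLinearMap S M)
  haveI : Module.FinitePresentation Q MQ := Module.finitePresentation_of_finite _ _
  -- every maximal ideal of Q contracts to an associated prime of R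
  have hproj : Module.Projective Q MQ := by
    apply Module.projective_of_localization_maximal
    intro P hP
    haveI : P.IsPrime := hP.isPrime
    set q : Ideal R := P.comap (algebraMap R Q) with hqdef
    obtain ⟨hqprime, hqdisj⟩ := (IsLocalization.isPrime_iff_isPrime_disjoint S Q P).mp hP.isPrime
    haveI : q.IsPrime := hqprime
    -- q consists of zerodivisors, so is contained in the union of associated primes
    have hsub : (q : Set R) ⊆ ⋃ p ∈ associatedPrimes R R, (p : Set R) := by
      intro r hr
      rw [biUnion_associatedPrimes_eq_zero_divisors]
      have hrS : r ∉ S := fun h => (Set.disjoint_left.mp hqdisj h) hr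
      rw [hS, mem_nonZeroDivisors_iff_right] at hrS
      push_neg at hrS
      obtain ⟨x, hx0, hxne⟩ := hrS
      exact ⟨x, hxne, by rwa [smul_eq_mul, mul_comm]⟩
    -- prime avoidance
    have hfin := assFinite (R := R) (M := R)
    obtain ⟨p0, hp0⟩ := associatedPrimes.nonempty R R
    have havoid : ∃ p ∈ hfin.toFinset, q ≤ p := by
      rw [← Ideal.subset_union_prime p0 p0 (fun p hp _ _ => ((hfin.mem_toFinset).mp hp).isPrime)]
      intro r hr
      obtain ⟨p, hp, hrp⟩ := Set.mem_iUnion₂.mp (hsub hr)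
      exact Set.mem_iUnion₂.mpr ⟨p, hfin.mem_toFinset.mpr hp, hrp⟩
    obtain ⟨p, hpass, hqp⟩ := havoid
    rw [Set.Finite.mem_toFinset] at hpass
    haveI : p.IsPrime := hpass.isPrime
    -- p is disjoint from S
    have hpdisj : Disjoint (S : Set R) (p : Set R) := by
      rw [Set.disjoint_left]
      intro s hsS hsp
      obtain ⟨-, y, hy⟩ := isAssociatedPrime_iff.mp (AssociatedPrimes.mem_iff.mp hpass)
      rw [colon_bot_eq_ann] at hy
      have : s • y = 0 := by
        rw [← Submodule.mem_annihilator_span_singleton, ← hy]; exact hsp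
      have hy0 : y = 0 :=
        mem_nonZeroDivisors_iff_right.mp hsS y (by rwa [smul_eq_mul, mul_comm] at this)
      rw [hy0, Submodule.span_singleton_eq_bot.mpr rfl, Submodule.annihilator_bot] at hy
      exact (hpass.isPrime.ne_top) hy
    -- maximality gives q = p
    have hqeqp : q = p := by
      have hP' : (Ideal.map (algebraMap R Q) p).IsPrime :=
        IsLocalization.isPrime_of_isPrime_disjoint S Q p inferInstance hpdisj
      have hle : P ≤ Ideal.map (algebraMap R Q) p := by
        conv_lhs => rw [← IsLocalization.map_comap S Q P]
        exact Ideal.map_mono hqp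
      have := hP.eq_of_le hP'.ne_top hle
      rw [hqdef, this]; exact IsLocalization.under_map_of_isPrime_disjoint S Q inferInstance hpdisj
    have hqass : q ∈ associatedPrimes R R := hqeqp ▸ hpass
    -- now transfer freeness through freeLocus
    have hmem : (⟨q, hqprime⟩ : PrimeSpectrum R) ∈ Module.freeLocus R M :=
      Module.mem_freeLocus.mpr (hgenfree q hqass)
    have hmemQ : (⟨P, hP.isPrime⟩ : PrimeSpectrum Q) ∈ Module.freeLocus Q MQ := by
      rw [Module.freeLocus_localization]
      exact hmem
    haveI : Module.Free (Localization.AtPrime P) (LocalizedModule P.primeCompl MQ) :=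
      Module.mem_freeLocus.mp hmemQ
    infer_instance
  -- split a surjection from a finite free module
  obtain ⟨n, π, hπ⟩ := Module.Finite.exists_fin' Q MQ
  obtain ⟨s, hs⟩ := Module.projective_lifting_property π LinearMap.id hπ
  have hsinj : Function.Injective s := by
    intro a b hab
    have := congrArg π hab
    have h1 : π (s a) = a := by rw [← LinearMap.comp_apply, hs]; rfl
    have h2 : π (s b) = b := by rw [← LinearMap.comp_apply, hs]; rfl
    rwa [h1, h2] at this
  -- the map M → MQ is injective by torsion-freeness
  have hmkinj : Function.Injective (LocalizedModule.mkLinearMap S M) := by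
    rw [injective_iff_map_eq_zero]
    intro x hx
    obtain ⟨c, hc⟩ := IsLocalizedModule.eq_zero_iff S (LocalizedModule.mkLinearMap S M) |>.mp hx
    exact htf c c.2 x hc
  set φ : M →ₗ[R] (Fin n → Q) :=
    (s.restrictScalars R) ∘ₗ (LocalizedModule.mkLinearMap S M) with hφ
  have hφinj : Function.Injective φ := hsinj.comp hmkinj
  -- clear denominators
  obtain ⟨k, v, hv⟩ := Module.Finite.exists_fin (R := R) (M := M)
  obtain ⟨c, hc⟩ := IsLocalization.exist_integer_multiples S (Finset.univ : Finset (Fin k × Fin n))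
    (fun i => φ (v i.1) i.2)
  have hint : ∀ x : M, ∀ j : Fin n, IsLocalization.IsInteger R ((c : R) • φ x j) := by
    have : (⊤ : Submodule R M) ≤ Submodule.comap φ
        (Submodule.pi Set.univ (fun _ : Fin n =>
          (LinearMap.range (Algebra.linearMap R Q)).comap
            (LinearMap.lsmul R Q (c : R)))) := by
      rw [← hv, Submodule.span_le]
      rintro x ⟨i, rfl⟩
      intro j _
      simpa [IsLocalization.IsInteger] using hc (i, j) (Finset.mem_univ _)
    intro x j
    have h2 := this (Submodule.mem_top : x ∈ (⊤ : Submodule R M))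
    rw [Submodule.mem_comap, Submodule.mem_pi] at h2
    simpa [IsLocalization.IsInteger] using h2 j (Set.mem_univ j)
  -- assemble the map into R^n
  have hanj : Function.Injective (Algebra.linearMap R Q) :=
    IsLocalization.injective Q (le_refl S)
  set e : R ≃ₗ[R] LinearMap.range (Algebra.linearMap R Q) :=
    LinearEquiv.ofInjective _ hanj with he
  set g : M →ₗ[R] (Fin n → R) := LinearMap.pi (fun j =>
    (e.symm : LinearMap.range (Algebra.linearMap R Q) →ₗ[R] R) ∘ₗ
      LinearMap.codRestrict _ ((c : R) • ((LinearMap.proj j : (Fin n → Q) →ₗ[R] Q) ∘ₗ φ))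
        (fun x => by simpa [IsLocalization.IsInteger] using hint x j)) with hg
  refine ⟨n, g, ?_⟩
  rw [injective_iff_map_eq_zero]
  intro x hx
  apply hφinj
  rw [map_zero]
  funext j
  have hj : g x j = 0 := congrFun hx j
  rw [hg] at hj
  simp only [LinearMap.pi_apply, LinearMap.comp_apply, LinearEquiv.coe_coe] at hj
  rw [show (0 : R) = e.symm 0 by simp] at hj
  have hcod := e.symm.injective hj
  have h0 : (c : R) • φ x j = 0 := by
    have := congrArg Subtype.val hcod
    simpa [LinearMap.codRestrict] using this
  have hcu : IsUnit (algebraMap R Q (c : R)) := IsLocalization.map_units Q c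
  have hmul : (algebraMap R Q (c : R)) * (φ x j) = 0 := by
    rw [← Algebra.smul_def]; exact h0
  have := hcu.mul_left_cancel (by rw [hmul, mul_zero] : algebraMap R Q (c:R) * φ x j = _ * 0)
  simpa using this


end Aux2

theorem completion_of_torsionfree_generically_free_is_torsionfree
    (R : Type) [CommRing R] [IsNoetherianRing R] [IsLocalRing R]
    (M : Type) [AddCommGroup M] [Module R M] [Module.Finite R M]
    (htf : IsTorsionFreeMod R M)
    (hgenfree : ∀ (p : Ideal R) [p.IsPrime], p ∈ associatedPrimes R R →
      Module.Free (Localization.AtPrime p) (LocalizedModule p.primeCompl M)) :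
    IsTorsionFreeMod (AdicCompletion (maximalIdeal R) R)
      (AdicCompletion (maximalIdeal R) M) := by
  obtain ⟨n, f, hf⟩ := embed_free R M htf hgenfree
  have hinj : Function.Injective (AdicCompletion.map (maximalIdeal R) f) :=
    AdicCompletion.map_injective (maximalIdeal R) hf
  intro r hr x hx
  apply hinj
  rw [map_zero]
  apply (AdicCompletion.piEquivFin (maximalIdeal R) n).injective
  rw [map_zero]
  have h1 : r • ((AdicCompletion.piEquivFin (maximalIdeal R) n)
      ((AdicCompletion.map (maximalIdeal R) f) x)) = 0 := by
    rw [← map_smul, ← map_smul, hx, map_zero, map_zero]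
  funext j
  simp only [Pi.zero_apply]
  refine mem_nonZeroDivisors_iff_right.mp hr _ ?_
  rw [mul_comm]
  have h2 := congrFun h1 j
  simpa using h2

end
end

section
/- Let (R, m) be a commutative Noetherian local ring and let M be a finitely generated R-module which has rank r, i.e., M_p ≅ R_p^r for every associated prime p of R. Then the m-adic completion M̂ has rank r over R̂, i.e., M̂_q ≅ R̂_q^r for every associated prime q of R̂. -/
noncomputable section

open CategoryTheory IsLocalRing

open TensorProduct

/-- If `A` is a flat algebra over a Noetherian ring `R`, then the contraction of any
associated prime of `A` to `R` is contained in an associated prime of `R`. -/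
lemma exists_assoc_ge_comap (R A : Type) [CommRing R] [IsNoetherianRing R] [CommRing A]
    [Algebra R A] [Module.Flat R A] {q : Ideal A} (hq : IsAssociatedPrime q A) :
    ∃ P : Ideal R, IsAssociatedPrime P R ∧ q.comap (algebraMap R A) ≤ P := by
  classical
  obtain ⟨hqp, x, hx⟩ := hq
  have hx0 : x ≠ 0 := by
    rintro rfl
    refine hqp.ne_top ?_
    rw [hx, Ideal.radical_eq_top]
    ext a
    simp [Submodule.mem_colon_singleton]
  set p : Ideal R := q.comap (algebraMap R A) with hp
  obtain ⟨x, hx0, hpx⟩ : ∃ x' : A, x' ≠ 0 ∧ ∀ r ∈ p, r • x' = 0 := by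
    have hfg : (p.map (algebraMap R A)).FG := by
      obtain ⟨t, ht⟩ := IsNoetherian.noetherian p
      exact ⟨t.image (algebraMap R A), by rw [Finset.coe_image, ← Ideal.map_span]; exact congrArg _ ht⟩
    have hle : p.map (algebraMap R A) ≤ ((⊥ : Submodule A A).colon {x}).radical := by
      rw [← hx]; exact Ideal.map_comap_le
    obtain ⟨n, hn⟩ := Ideal.exists_pow_le_of_le_radical_of_fg hle hfg
    have hex : ∃ n, p.map (algebraMap R A) ^ n ≤ (⊥ : Submodule A A).colon {x} := ⟨n, hn⟩
    by_cases hk : Nat.find hex = 0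
    · exfalso; apply hx0
      have := Nat.find_spec hex
      rw [hk, pow_zero, Ideal.one_eq_top] at this
      have h1 := this (Submodule.mem_top : (1 : A) ∈ (⊤ : Ideal A))
      rw [Submodule.mem_colon_singleton] at h1
      simpa using h1
    · have hnot := Nat.find_min hex (show Nat.find hex - 1 < Nat.find hex by omega)
      have hspec := Nat.find_spec hex
      rw [show Nat.find hex = Nat.find hex - 1 + 1 by omega] at hspec
      obtain ⟨a, ha, hax⟩ := SetLike.not_le_iff_exists.mp hnot
      rw [Submodule.mem_colon_singleton, Submodule.mem_bot] at hax
      refine ⟨a • x, hax, fun r hr => ?_⟩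
      rw [← algebraMap_smul A r (a • x), smul_smul]
      have hmem : algebraMap R A r * a ∈ p.map (algebraMap R A) ^ (Nat.find hex - 1 + 1) := by
        rw [pow_succ']; exact Ideal.mul_mem_mul (Ideal.mem_map_of_mem _ hr) ha
      have := hspec hmem
      rwa [Submodule.mem_colon_singleton, Submodule.mem_bot] at this
  obtain ⟨k, s, hs⟩ := Submodule.fg_iff_exists_fin_generating_family.mp
    (IsNoetherian.noetherian p)
  let φ : R →ₗ[R] (Fin k → R) := LinearMap.pi fun i => LinearMap.lsmul R R (s i)
  set K := LinearMap.ker φ with hK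
  have hexact : Function.Exact K.subtype φ := LinearMap.exact_subtype_ker_map φ
  have htensor := Module.Flat.lTensor_exact A hexact
  have hker : φ.lTensor A (x ⊗ₜ 1) = 0 := by
    have h1 : φ.lTensor A (x ⊗ₜ 1) = x ⊗ₜ (φ 1) := rfl
    apply (TensorProduct.piScalarRight R A A (Fin k)).injective
    rw [h1, (TensorProduct.piScalarRight R A A (Fin k)).map_zero]
    have : TensorProduct.piScalarRight R A A (Fin k) (x ⊗ₜ (φ 1)) = fun j => (φ 1 j) • x := by
      simp only [TensorProduct.piScalarRight_apply, TensorProduct.piScalarRightHom_tmul]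
    rw [this]
    funext j
    have hsj : s j ∈ p := by
      rw [← hs]; exact Submodule.subset_span (Set.mem_range_self j)
    have : φ 1 j = s j := by simp [φ]
    rw [this]
    exact hpx _ hsj
  obtain ⟨z, hz⟩ := (htensor (x ⊗ₜ 1)).mp hker
  rcases eq_or_ne K ⊥ with hKbot | hKbot
  · exfalso
    have hsub : (K.subtype : K →ₗ[R] R) = 0 := by
      ext c
      have hc : (c : R) ∈ (⊥ : Submodule R R) := by rw [← hKbot]; exact c.2
      simpa using hc
    rw [hsub, LinearMap.lTensor_zero] at hz
    have : (x ⊗ₜ (1 : R) : A ⊗[R] R) = 0 := by rw [← hz]; rfl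
    apply hx0
    have := congrArg (TensorProduct.rid R A) this
    simpa using this
  · obtain ⟨y, hyK, hy0⟩ := Submodule.exists_mem_ne_zero_of_ne_bot hKbot
    have hpy : p ≤ (Submodule.span R {y}).annihilator := by
      rw [← hs, Submodule.span_le]
      rintro _ ⟨i, rfl⟩
      rw [SetLike.mem_coe, Submodule.mem_annihilator_span_singleton]
      have : φ y = 0 := hyK
      have := congrFun this i
      simpa [φ] using this
    obtain ⟨P, hP, hannP⟩ := exists_le_isAssociatedPrime_of_isNoetherianRing R y hy0
    exact ⟨P, hP, hpy.trans (fun a ha => hannP (by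
      rw [Submodule.mem_colon_singleton, Submodule.mem_bot]
      exact (Submodule.mem_annihilator_span_singleton _ _).mp ha))⟩

/-- Base change the freeness of a localization along a ring map carrying the complement of
`P` into the complement of `q`. -/
lemma localized_baseChange_free (R A : Type) [CommRing R] [CommRing A] [Algebra R A]
    (M N : Type) [AddCommGroup M] [Module R M] [AddCommGroup N] [Module A N]
    (eN : A ⊗[R] M ≃ₗ[A] N) (q : Ideal A) [q.IsPrime] (P : Ideal R) [P.IsPrime]
    (hle : ∀ y : R, y ∈ P.primeCompl → algebraMap R A y ∈ q.primeCompl)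
    (r : ℕ)
    (e : (LocalizedModule P.primeCompl M) ≃ₗ[Localization.AtPrime P]
      (Fin r → Localization.AtPrime P)) :
    Nonempty ((LocalizedModule q.primeCompl N) ≃ₗ[Localization.AtPrime q]
      (Fin r → Localization.AtPrime q)) := by
  classical
  have hunits : ∀ y : P.primeCompl, IsUnit (algebraMap R (Localization.AtPrime q) y) := by
    rintro ⟨y, hy⟩
    rw [IsScalarTower.algebraMap_apply R A (Localization.AtPrime q)]
    exact IsLocalization.map_units (Localization.AtPrime q)
      (⟨algebraMap R A y, hle y hy⟩ : q.primeCompl)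
  letI : Algebra (Localization.AtPrime P) (Localization.AtPrime q) :=
    (IsLocalization.lift hunits).toAlgebra
  haveI : IsScalarTower R (Localization.AtPrime P) (Localization.AtPrime q) :=
    IsScalarTower.of_algebraMap_eq' (by
      show algebraMap R (Localization.AtPrime q) =
        (IsLocalization.lift hunits).comp (algebraMap R (Localization.AtPrime P))
      exact (IsLocalization.lift_comp hunits).symm)
  set B := Localization.AtPrime q
  set Rp := Localization.AtPrime P
  let t1 : LocalizedModule q.primeCompl N ≃ₗ[B] B ⊗[A] N :=
    ((IsLocalizedModule.isBaseChange q.primeCompl B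
      (LocalizedModule.mkLinearMap q.primeCompl N)).equiv).symm
  let t2 : B ⊗[A] N ≃ₗ[B] B ⊗[A] (A ⊗[R] M) :=
    (TensorProduct.AlgebraTensorModule.congr (LinearEquiv.refl B B) eN).symm
  let t3 : B ⊗[A] (A ⊗[R] M) ≃ₗ[B] B ⊗[R] M :=
    TensorProduct.AlgebraTensorModule.cancelBaseChange R A B B M
  let t4 : B ⊗[R] M ≃ₗ[B] B ⊗[Rp] (Rp ⊗[R] M) :=
    (TensorProduct.AlgebraTensorModule.cancelBaseChange R Rp B B M).symm
  let eLocM : Rp ⊗[R] M ≃ₗ[Rp] LocalizedModule P.primeCompl M :=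
    (IsLocalizedModule.isBaseChange P.primeCompl Rp
      (LocalizedModule.mkLinearMap P.primeCompl M)).equiv
  let t5 : B ⊗[Rp] (Rp ⊗[R] M) ≃ₗ[B] B ⊗[Rp] (Fin r → Rp) :=
    TensorProduct.AlgebraTensorModule.congr (LinearEquiv.refl B B) (eLocM ≪≫ₗ e)
  let t6 : B ⊗[Rp] (Fin r → Rp) ≃ₗ[B] (Fin r → B) :=
    TensorProduct.piScalarRight Rp B B (Fin r)
  exact ⟨t1 ≪≫ₗ t2 ≪≫ₗ t3 ≪≫ₗ t4 ≪≫ₗ t5 ≪≫ₗ t6⟩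

theorem completion_preserves_rank
    (R : Type) [CommRing R] [IsNoetherianRing R] [IsLocalRing R]
    (M : Type) [AddCommGroup M] [Module R M] [Module.Finite R M]
    (r : ℕ) (hrank : HasRankN R M r) :
    HasRankN (AdicCompletion (maximalIdeal R) R)
      (AdicCompletion (maximalIdeal R) M) r := by
  intro q hqI hq
  haveI : Module.Flat R (AdicCompletion (maximalIdeal R) R) :=
    inferInstance
  obtain ⟨P, hP, hle⟩ := exists_assoc_ge_comap R (AdicCompletion (maximalIdeal R) R) hq
  haveI : P.IsPrime := hP.isPrime
  obtain ⟨e⟩ := hrank P (AssociatedPrimes.mem_iff.mpr hP)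
  exact localized_baseChange_free R (AdicCompletion (maximalIdeal R) R) M
    (AdicCompletion (maximalIdeal R) M)
    (AdicCompletion.ofTensorProductEquivOfFiniteNoetherian (maximalIdeal R) M)
    q P (fun y hy hmem => hy (hle hmem)) r e

end
end
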